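/- In the two-user selfish routing game on the load-balancing network, the symmetric profile (x₁*, x₂*) = (r/2 + ζ, r/2 + ζ), where ζ = cδ/(2L), is a Nash equilibrium: x₁* minimizes J₁(·, x₂*) over [0, r] and x₂* minimizes J₂(x₁*, ·) over [0, r]. -/

import Mathlib

/-- Elbow latency function with parameters `r, L, δ`. -/
noncomputable def T (r L δ x : ℝ) : ℝ := max 0 (L / δ * (x - r) + L)

/-- Cost of user 1 in the two-user load-balancing game. -/
noncomputable def J₁ (r L δ c x₁ x₂ : ℝ) : ℝ :=
  x₁ * T r L δ (x₁ + (r - x₂)) + (r - x₁) * (c + T r L δ (x₂ + (r - x₁)))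

/-- Cost of user 2 in the two-user load-balancing game. -/
noncomputable def J₂ (r L δ c x₁ x₂ : ℝ) : ℝ :=
  x₂ * T r L δ (x₂ + (r - x₁)) + (r - x₂) * (c + T r L δ (x₁ + (r - x₂)))

set_option maxHeartbeats 1000000 in
lemma key (r L δ c : ℝ) (hδ : 0 < δ) (hδL : δ < L) (hLc : L < c)
    (hcδ : c * δ < r * L) (x : ℝ) (hx0 : 0 ≤ x) (hxr : x ≤ r) :
    J₁ r L δ c (r / 2 + c * δ / (2 * L)) (r / 2 + c * δ / (2 * L)) ≤
      J₁ r L δ c x (r / 2 + c * δ / (2 * L)) := by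
  have hL : (0 : ℝ) < L := hδ.trans hδL
  have hc : (0 : ℝ) < c := hL.trans hLc
  have hδ' : δ ≠ 0 := ne_of_gt hδ
  have hL' : L ≠ 0 := ne_of_gt hL
  obtain ⟨s, hs⟩ : ∃ s : ℝ, s = r / 2 + c * δ / (2 * L) := ⟨_, rfl⟩
  rw [← hs]
  have hTs : T r L δ (s + (r - s)) = L := by
    have h : s + (r - s) = r := by ring
    rw [T, h, show L / δ * (r - r) + L = L by ring, max_eq_right hL.le]
  have h2L : L * s = r * L / 2 + c * δ / 2 := by
    rw [hs]; field_simp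
  rw [J₁, J₁, hTs]
  rcases le_or_gt 0 (L / δ * (x + (r - s) - r) + L) with h1 | h1 <;>
    rcases le_or_gt 0 (L / δ * (s + (r - x) - r) + L) with h2 | h2
  · -- both active
    rw [T, T, max_eq_right h1, max_eq_right h2]
    have e : x * (L / δ * (x + (r - s) - r) + L)
          + (r - x) * (c + (L / δ * (s + (r - x) - r) + L))
          - (s * L + (r - s) * (c + L)) = 2 * (L / δ) * (x - s) ^ 2 := by
      subst hs; field_simp; ring
    nlinarith [mul_nonneg (mul_nonneg (by norm_num : (0:ℝ) ≤ 2)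
      (le_of_lt (div_pos hL hδ))) (sq_nonneg (x - s))]
  · -- second latency zero : x - s ≥ δ
    rw [T, T, max_eq_right h1, max_eq_left h2.le]
    have e2 : (L / δ * (s + (r - x) - r) + L) * δ = L * (s - x) + L * δ := by
      rw [add_mul, mul_right_comm, div_mul_cancel₀ L hδ']; ring
    have hu : δ ≤ x - s := by
      by_contra h
      push_neg at h
      nlinarith [mul_neg_of_neg_of_pos h2 hδ]
    have e : δ * (x * (L / δ * (x + (r - s) - r) + L) + (r - x) * (c + 0)
          - (s * L + (r - s) * (c + L)))
        = L * (x - s) ^ 2 + (L * δ + L * s - c * δ) * (x - s) + L * δ * (s - r) := by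
      field_simp; ring
    have hP : 0 < r * L - c * δ := by linarith
    have hLs : c * δ < L * s := by linarith
    have hD : 0 ≤ δ * (x * (L / δ * (x + (r - s) - r) + L) + (r - x) * (c + 0)
          - (s * L + (r - s) * (c + L))) := by
      rw [e]
      nlinarith [mul_nonneg (sub_nonneg.2 hu) (sub_nonneg.2 hu),
        mul_le_mul_of_nonneg_left hu hL.le,
        mul_nonneg (sub_nonneg.2 hu) hP.le,
        mul_pos hδ hL, mul_nonneg (mul_nonneg hL.le hδ.le) (sub_nonneg.2 hu)]
    nlinarith [mul_pos hδ hL]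
  · -- first latency zero : s - x ≥ δ
    rw [T, T, max_eq_left h1.le, max_eq_right h2]
    have e1 : (L / δ * (x + (r - s) - r) + L) * δ = L * (x - s) + L * δ := by
      rw [add_mul, mul_right_comm, div_mul_cancel₀ L hδ']; ring
    have hu : δ ≤ s - x := by
      by_contra h
      push_neg at h
      nlinarith [mul_neg_of_neg_of_pos h1 hδ]
    have e : δ * (x * 0 + (r - x) * (c + (L / δ * (s + (r - x) - r) + L))
          - (s * L + (r - s) * (c + L)))
        = L * (s - x) ^ 2 + (c * δ + L * δ + L * (r - s)) * (s - x) - L * δ * s := by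
      field_simp; ring
    have hD : 0 ≤ δ * (x * 0 + (r - x) * (c + (L / δ * (s + (r - x) - r) + L))
          - (s * L + (r - s) * (c + L))) := by
      rw [e]
      have hv0 : (0:ℝ) ≤ s - x := le_trans hδ.le hu
      have q1 : 0 ≤ L * (s - x) * ((s - x) - δ) :=
        mul_nonneg (mul_nonneg hL.le hv0) (sub_nonneg.2 hu)
      have q2 : 0 ≤ (c * δ) * ((s - x) - δ) :=
        mul_nonneg (mul_nonneg hc.le hδ.le) (sub_nonneg.2 hu)
      have hrs : (0:ℝ) ≤ L * (r - s) := by nlinarith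
      have q3 : 0 ≤ (L * (r - s)) * ((s - x) - δ) :=
        mul_nonneg hrs (sub_nonneg.2 hu)
      have q4 : 0 ≤ (L * δ) * ((s - x) - δ) :=
        mul_nonneg (mul_nonneg hL.le hδ.le) (sub_nonneg.2 hu)
      have h2Lδ : δ * (L * s) = δ * (r * L / 2 + c * δ / 2) := by rw [h2L]
      nlinarith [q1, q2, q3, q4, h2Lδ, mul_pos hδ hL]
    nlinarith [mul_pos hδ hL]
  · -- both zero: impossible
    exfalso
    have : (L / δ * (x + (r - s) - r) + L) + (L / δ * (s + (r - x) - r) + L) = 2 * L := by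
      ring
    linarith

theorem symmetric_profile_is_nash_equilibrium
    (r L δ c : ℝ) (hδ : 0 < δ) (hδL : δ < L) (hLc : L < c) (hcδ : c * δ < r * L)
    (ζ : ℝ) (hζ : ζ = c * δ / (2 * L)) :
    (r / 2 + ζ) ∈ Set.Icc (0 : ℝ) r ∧
    (∀ x₁ ∈ Set.Icc (0 : ℝ) r,
      J₁ r L δ c (r / 2 + ζ) (r / 2 + ζ) ≤ J₁ r L δ c x₁ (r / 2 + ζ)) ∧
    (∀ x₂ ∈ Set.Icc (0 : ℝ) r,
      J₂ r L δ c (r / 2 + ζ) (r / 2 + ζ) ≤ J₂ r L δ c (r / 2 + ζ) x₂) := by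
  have hL : (0 : ℝ) < L := hδ.trans hδL
  have hc : (0 : ℝ) < c := hL.trans hLc
  have hr : (0 : ℝ) < r := by nlinarith
  have hζ0 : 0 < ζ := by rw [hζ]; positivity
  have hζr : ζ < r / 2 := by
    rw [hζ, div_lt_iff₀ (by positivity)]; nlinarith
  subst hζ
  refine ⟨⟨by linarith, by linarith⟩, ?_, ?_⟩
  · intro x₁ hx₁
    exact key r L δ c hδ hδL hLc hcδ x₁ hx₁.1 hx₁.2
  · intro x₂ hx₂
    have hsym : ∀ a b, J₂ r L δ c a b = J₁ r L δ c b a := by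
      intro a b; simp [J₁, J₂]
    rw [hsym, hsym]
    exact key r L δ c hδ hδL hLc hcδ x₂ hx₂.1 hx₂.2
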